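/- Uniform strict decrease of distances when moving toward the projection: Let n be a natural number, let C be a nonempty compact convex subset of ℝⁿ, let x ∈ ℝⁿ \ C, let p ∈ C satisfy ‖x − p‖ ≤ ‖x − c‖ for all c ∈ C (p is the nearest point of C to x), and let z = x + t·(p − x) for some real t with 0 < t ≤ 1. Then there exists δ > 0 such that ‖z − c‖ ≤ ‖x − c‖ − δ for every c ∈ C. -/

import Mathlib

/-- Uniform strict decrease of distances when moving toward the projection: if `C ⊆ ℝⁿ`
is nonempty compact convex, `x ∉ C`, `p` is the nearest point of `C` to `x`, and
`z = x + t • (p - x)` with `0 < t ≤ 1`, then there is `δ > 0` with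
`‖z - c‖ ≤ ‖x - c‖ - δ` for every `c ∈ C`. -/
theorem dist_decrease_towards_projection (n : ℕ)
    (C : Set (EuclideanSpace ℝ (Fin n))) (hC : C.Nonempty)
    (hcomp : IsCompact C) (hconv : Convex ℝ C)
    (x : EuclideanSpace ℝ (Fin n)) (hx : x ∉ C)
    (p : EuclideanSpace ℝ (Fin n)) (hp : p ∈ C)
    (hnear : ∀ c ∈ C, ‖x - p‖ ≤ ‖x - c‖)
    (t : ℝ) (ht0 : 0 < t) (ht1 : t ≤ 1) :
    ∃ δ : ℝ, 0 < δ ∧ ∀ c ∈ C, ‖(x + t • (p - x)) - c‖ ≤ ‖x - c‖ - δ := by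
  haveI : Nonempty C := ⟨⟨p, hp⟩⟩
  -- inner product characterization
  have hmin : ‖x - p‖ = ⨅ w : C, ‖x - w‖ := by
    apply le_antisymm
    · exact le_ciInf fun w => hnear w w.2
    · exact ciInf_le ⟨0, fun _ ⟨_, h⟩ => h ▸ norm_nonneg _⟩ (⟨p, hp⟩ : C)
  have hinner : ∀ c ∈ C, (inner ℝ (x - p) (c - p) : ℝ) ≤ 0 :=
    (norm_eq_iInf_iff_real_inner_le_zero hconv hp).1 hmin
  have hxp : 0 < ‖x - p‖ := by
    rw [norm_pos_iff, sub_ne_zero]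
    rintro rfl; exact hx hp
  -- bound M on ‖x - c‖
  obtain ⟨M, hM⟩ : ∃ M : ℝ, ∀ c ∈ C, ‖x - c‖ ≤ M := by
    obtain ⟨M, hM⟩ := hcomp.isBounded.subset_ball x
    exact ⟨M, fun c hc => by
      have := hM hc
      rw [Metric.mem_ball, dist_comm] at this
      simpa [dist_eq_norm] using this.le⟩
  have hM0 : 0 < M := lt_of_lt_of_le hxp (hM p hp)
  refine ⟨t * ‖x - p‖ ^ 2 / (2 * M), by positivity, fun c hc => ?_⟩
  set δ := t * ‖x - p‖ ^ 2 / (2 * M) with hδ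
  set z := x + t • (p - x) with hz
  have key : ‖z - c‖ ^ 2 ≤ ‖x - c‖ ^ 2 - t * ‖x - p‖ ^ 2 := by
    have hzc : z - c = (x - c) - t • (x - p) := by
      rw [hz]; module
    have expand : ‖z - c‖ ^ 2
        = ‖x - c‖ ^ 2 - 2 * t * (inner ℝ (x - c) (x - p) : ℝ) + t ^ 2 * ‖x - p‖ ^ 2 := by
      rw [hzc, norm_sub_sq_real, real_inner_smul_right, norm_smul]
      simp [mul_pow, abs_of_pos ht0]; ring
    have hip : ‖x - p‖ ^ 2 ≤ (inner ℝ (x - c) (x - p) : ℝ) := by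
      have : (inner ℝ (x - c) (x - p) : ℝ) = ‖x - p‖ ^ 2 - (inner ℝ (x - p) (c - p) : ℝ) := by
        have : x - c = (x - p) - (c - p) := by abel
        rw [this, inner_sub_left, real_inner_self_eq_norm_sq, real_inner_comm]
      rw [this]
      linarith [hinner c hc]
    have ht2 : t ^ 2 ≤ t := by nlinarith
    nlinarith [sq_nonneg (‖x - p‖), mul_le_mul_of_nonneg_left hip (by linarith : (0:ℝ) ≤ 2 * t)]
  have hzx : ‖z - c‖ ≤ ‖x - c‖ := by
    nlinarith [norm_nonneg (z - c), norm_nonneg (x - c), sq_nonneg (‖x - p‖), mul_pos ht0 (pow_pos hxp 2)]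
  have hsum : ‖x - c‖ + ‖z - c‖ ≤ 2 * M := by
    have := hM c hc
    linarith
  have hxc : 0 < ‖x - c‖ := by
    rw [norm_pos_iff, sub_ne_zero]
    rintro rfl; exact hx hc
  have hpos : 0 < ‖x - c‖ + ‖z - c‖ := lt_of_lt_of_le hxc (by linarith [norm_nonneg (z - c)])
  have hfac : (‖x - c‖ - ‖z - c‖) * (‖x - c‖ + ‖z - c‖) ≥ t * ‖x - p‖ ^ 2 := by
    nlinarith
  have hδsum : δ * (‖x - c‖ + ‖z - c‖) ≤ t * ‖x - p‖ ^ 2 := by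
    rw [hδ, div_mul_eq_mul_div, div_le_iff₀ (by linarith : (0:ℝ) < 2 * M)]
    have h1 : 0 ≤ t * ‖x - p‖ ^ 2 := by positivity
    nlinarith
  have := hfac.trans' hδsum  -- wrong direction? check
  nlinarith
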